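/- Let a(m) denote the number of signatures of length m. Then a(1) = 3, a(2) = 7, and a(m) = 2·a(m−1) + a(m−2) for all m ≥ 3. -/

import Mathlib

open scoped Classical

/-- The three-letter alphabet {uncovered, covered, occupied}. -/
inductive VState : Type
  | unc | cov | occ
  deriving DecidableEq

instance instFintypeVState : Fintype VState :=
  ⟨{VState.unc, VState.cov, VState.occ}, fun x => by cases x <;> simp⟩

/-- A signature of length `m`: a string over {unc, cov, occ} with no adjacent
(unc, occ) or (occ, unc) pair. -/
def IsSignature {m : ℕ} (σ : Fin m → VState) : Prop :=
  ∀ i : Fin m, ∀ h : (i : ℕ) + 1 < m,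
    ¬(σ i = VState.unc ∧ σ ⟨(i : ℕ) + 1, h⟩ = VState.occ) ∧
    ¬(σ i = VState.occ ∧ σ ⟨(i : ℕ) + 1, h⟩ = VState.unc)

/-- `a(m)`: the number of signatures of length `m`. -/
noncomputable def numSig (m : ℕ) : ℕ :=
  Fintype.card {σ : Fin m → VState // IsSignature σ}

/-- Allowed adjacency between two states. -/
def ok (t s : VState) : Prop :=
  ¬(t = VState.unc ∧ s = VState.occ) ∧ ¬(t = VState.occ ∧ s = VState.unc)

instance : ∀ t s, Decidable (ok t s) := fun t s => by unfold ok; infer_instance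

/-- Number of signatures of length `m + 1` ending in `s`. -/
noncomputable def bCount (m : ℕ) (s : VState) : ℕ :=
  Fintype.card {σ : Fin (m + 1) → VState // IsSignature σ ∧ σ (Fin.last m) = s}

lemma snoc_val {m : ℕ} {σ : Fin (m + 1) → VState} {s : VState} (i : Fin (m + 2))
    (h : (i : ℕ) < m + 1) : (Fin.snoc σ s : Fin (m + 2) → VState) i = σ ⟨(i : ℕ), h⟩ := by
  have e : i = Fin.castSucc ⟨(i : ℕ), h⟩ := rfl
  conv_lhs => rw [e]
  rw [Fin.snoc_castSucc]

lemma snoc_val_last {m : ℕ} {σ : Fin (m + 1) → VState} {s : VState} (i : Fin (m + 2))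
    (h : (i : ℕ) = m + 1) : (Fin.snoc σ s : Fin (m + 2) → VState) i = s := by
  have : i = Fin.last (m + 1) := Fin.ext h
  rw [this, Fin.snoc_last]

lemma isSig_init {m : ℕ} {σ : Fin (m + 2) → VState} (hσ : IsSignature σ) :
    IsSignature (Fin.init σ) := by
  intro ⟨iv, hiv⟩ h
  exact hσ ⟨iv, by omega⟩ (show iv + 1 < m + 2 by omega)

lemma ok_last {m : ℕ} {σ : Fin (m + 2) → VState} (hσ : IsSignature σ) :
    ok (σ (Fin.castSucc (Fin.last m))) (σ (Fin.last (m + 1))) :=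
  hσ ⟨m, by omega⟩ (show m + 1 < m + 2 by omega)

lemma isSig_snoc {m : ℕ} {σ : Fin (m + 1) → VState} {s : VState}
    (hσ : IsSignature σ) (h : ok (σ (Fin.last m)) s) :
    IsSignature (Fin.snoc σ s) := by
  intro i hi
  rcases lt_or_eq_of_le (Nat.lt_succ_iff.mp hi) with hlt | heq
  · rw [snoc_val i (by omega), snoc_val ⟨(i : ℕ) + 1, hi⟩ (by simpa using hlt)]
    exact hσ ⟨(i : ℕ), by omega⟩ (show (i : ℕ) + 1 < m + 1 from hlt)
  · rw [snoc_val i (by omega), snoc_val_last ⟨(i : ℕ) + 1, hi⟩ (by simpa using heq)]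
    simp only [show (i : ℕ) = m by omega]
    exact h

lemma sum_vstate (f : VState → ℕ) :
    ∑ s : VState, f s = f VState.unc + f VState.cov + f VState.occ := by
  have h : (Finset.univ : Finset VState) = {VState.unc, VState.cov, VState.occ} := by decide
  rw [h, Finset.sum_insert (by decide), Finset.sum_insert (by decide), Finset.sum_singleton]
  omega

lemma numSig_eq_sum (m : ℕ) : numSig (m + 1) = ∑ s : VState, bCount m s := by
  rw [numSig]
  calc Fintype.card {σ : Fin (m + 1) → VState // IsSignature σ}
      = Fintype.card (Σ s : VState,
          {x : {σ : Fin (m + 1) → VState // IsSignature σ} // x.1 (Fin.last m) = s}) :=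
        Fintype.card_congr (Equiv.sigmaFiberEquiv (fun x : {σ : Fin (m + 1) → VState // IsSignature σ} => x.1 (Fin.last m))).symm
    _ = ∑ s : VState, Fintype.card
          {x : {σ : Fin (m + 1) → VState // IsSignature σ} // x.1 (Fin.last m) = s} :=
        Fintype.card_sigma
    _ = ∑ s : VState, bCount m s := by
        refine Finset.sum_congr rfl fun s _ => ?_
        exact Fintype.card_congr
          (Equiv.subtypeSubtypeEquivSubtypeInter IsSignature (fun σ => σ (Fin.last m) = s))

lemma bCount_succ (m : ℕ) (s : VState) :
    bCount (m + 1) s = ∑ t : VState, if ok t s then bCount m t else 0 := by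
  have key : bCount (m + 1) s = Fintype.card (Σ t : VState,
      {σ : Fin (m + 1) → VState // (IsSignature σ ∧ σ (Fin.last m) = t) ∧ ok t s}) := by
    refine Fintype.card_congr (Equiv.ofBijective ?_ ?_).symm
    · refine fun x => ⟨Fin.snoc x.2.1 s, ⟨isSig_snoc x.2.2.1.1 ?_, Fin.snoc_last _ _⟩⟩
      rw [x.2.2.1.2]; exact x.2.2.2
    · constructor
      · rintro ⟨t, σ, ⟨hsig, hlast⟩, hok⟩ ⟨t', σ', ⟨hsig', hlast'⟩, hok'⟩ hFeq
        have hσ : σ = σ' := by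
          have := congrArg (fun τ : {σ : Fin (m + 2) → VState // _} => Fin.init τ.1) hFeq
          simpa [Fin.init_snoc] using this
        subst hσ
        have ht : t = t' := by rw [← hlast, ← hlast']
        subst ht
        rfl
      · rintro ⟨τ, hsig, hlast⟩
        refine ⟨⟨τ (Fin.castSucc (Fin.last m)), Fin.init τ,
          ⟨⟨isSig_init hsig, rfl⟩, ?_⟩⟩, ?_⟩
        · have := ok_last hsig
          rwa [hlast] at this
        · apply Subtype.ext
          show Fin.snoc (Fin.init τ) s = τ
          rw [← hlast]
          exact Fin.snoc_init_self τ
  rw [key, Fintype.card_sigma]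
  refine Finset.sum_congr rfl fun t _ => ?_
  by_cases h : ok t s
  · rw [if_pos h]
    exact Fintype.card_congr (Equiv.subtypeEquivRight fun σ => and_iff_left h)
  · rw [if_neg h]
    exact Fintype.card_eq_zero_iff.mpr ⟨fun x => h x.2.2⟩

lemma bCount_zero (s : VState) : bCount 0 s = 1 := by
  refine Fintype.card_eq_one_iff.mpr ⟨⟨fun _ => s, fun i h => absurd h (by omega), rfl⟩, ?_⟩
  rintro ⟨τ, hsig, hlast⟩
  apply Subtype.ext
  funext i
  have : i = Fin.last 0 := Fin.ext (by omega)
  rw [this]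
  exact hlast

lemma bCount_cov (k : ℕ) : bCount (k + 1) VState.cov = numSig (k + 1) := by
  rw [bCount_succ, numSig_eq_sum]
  refine Finset.sum_congr rfl fun t _ => ?_
  rw [if_pos (by cases t <;> simp [ok])]

/-- `a(1) = 3`, `a(2) = 7`, and `a(m) = 2·a(m−1) + a(m−2)` for all `m ≥ 3`. -/
theorem numSig_recurrence :
    numSig 1 = 3 ∧ numSig 2 = 7 ∧
      ∀ m : ℕ, 3 ≤ m → numSig m = 2 * numSig (m - 1) + numSig (m - 2) := by
  refine ⟨?_, ?_, ?_⟩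
  · have h : numSig 1 = ∑ s : VState, bCount 0 s := numSig_eq_sum 0
    rw [h, sum_vstate, bCount_zero, bCount_zero, bCount_zero]
  · have h : numSig 2 = ∑ s : VState, bCount 1 s := numSig_eq_sum 1
    have hb : ∀ s, bCount 1 s = ∑ t : VState, if ok t s then bCount 0 t else 0 :=
      fun s => bCount_succ 0 s
    rw [h, sum_vstate, hb, hb, hb, sum_vstate, sum_vstate, sum_vstate]
    simp [ok, bCount_zero]
  · intro m hm
    obtain ⟨k, rfl⟩ : ∃ k, m = k + 3 := ⟨m - 3, by omega⟩
    have e1 : k + 3 - 1 = k + 2 := rfl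
    have e2 : k + 3 - 2 = k + 1 := rfl
    rw [e1, e2]
    have h3 : numSig (k + 3) = ∑ s : VState, bCount (k + 2) s := numSig_eq_sum (k + 2)
    have h2 : numSig (k + 2) = ∑ s : VState, bCount (k + 1) s := numSig_eq_sum (k + 1)
    have hb : ∀ s, bCount (k + 2) s = ∑ t : VState, if ok t s then bCount (k + 1) t else 0 :=
      fun s => bCount_succ (k + 1) s
    rw [h3, h2, ← bCount_cov k, sum_vstate, sum_vstate, hb, hb, hb,
      sum_vstate, sum_vstate, sum_vstate]
    simp [ok]
    omega
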